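/- Let B be a small category, G = Set^B, and I a finite directed multigraph without directed cycles and with no branching vertices (Br(I) = ∅). Then for every diagram D : I → G the colimiting cocone κ : D ⇒ ΔS is a Van Kampen cocone. -/

import Mathlib

open CategoryTheory CategoryTheory.Limits

universe u

/-- A directed multigraph. -/
structure MGraph : Type (u + 1) where
  V : Type u
  E : Type u
  s : E → V
  t : E → V

/-- A diagram of shape a directed multigraph `I` in a category `C`
(a graph morphism into the underlying graph of `C`). -/
structure GDiagram (I : MGraph.{u}) (C : Type*) [Category C] where
  obj : I.V → C
  map : (e : I.E) → obj (I.s e) ⟶ obj (I.t e)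

section Core

variable {I : MGraph.{u}} {C : Type*} [Category C]

/-- A natural transformation between diagrams of shape `I`. -/
@[ext]
structure GHom (F G : GDiagram I C) where
  app : (i : I.V) → F.obj i ⟶ G.obj i
  naturality : ∀ e : I.E, F.map e ≫ app (I.t e) = app (I.s e) ≫ G.map e

/-- A transformation is cartesian if all its naturality squares are pullbacks. -/
def GHom.Cartesian {F G : GDiagram I C} (τ : GHom F G) : Prop :=
  ∀ e : I.E, IsPullback (F.map e) (τ.app (I.s e)) (τ.app (I.t e)) (G.map e)

/-- An object of the category `C^I ⇓ D` of cartesian transformations into `D`. -/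
structure CartObj (D : GDiagram I C) where
  diag : GDiagram I C
  hom : GHom diag D
  cart : hom.Cartesian

instance cartObjCategory (D : GDiagram I C) : Category (CartObj D) where
  Hom A B := { φ : GHom A.diag B.diag // ∀ i, φ.app i ≫ B.hom.app i = A.hom.app i }
  id A := ⟨⟨fun _ => 𝟙 _, fun e => by simp⟩, fun i => by simp⟩
  comp {A B C'} φ ψ :=
    ⟨⟨fun i => φ.1.app i ≫ ψ.1.app i, fun e => by
        rw [← Category.assoc, φ.1.naturality, Category.assoc, ψ.1.naturality, ← Category.assoc]⟩,
      fun i => by rw [Category.assoc, ψ.2 i, φ.2 i]⟩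
  id_comp f := Subtype.ext (GHom.ext (funext fun i => Category.id_comp _))
  comp_id f := Subtype.ext (GHom.ext (funext fun i => Category.comp_id _))
  assoc f g h := Subtype.ext (GHom.ext (funext fun i => Category.assoc _ _ _))

/-- A commutative cocone under a diagram of shape `I`. -/
structure GCocone (D : GDiagram I C) where
  pt : C
  leg : (i : I.V) → D.obj i ⟶ pt
  comm : ∀ e : I.E, D.map e ≫ leg (I.t e) = leg (I.s e)

/-- A cocone is colimiting if every cocone factors uniquely through it. -/
def GCocone.IsColimit {D : GDiagram I C} (c : GCocone D) : Prop :=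
  ∀ c' : GCocone D, ∃! f : c.pt ⟶ c'.pt, ∀ i, c.leg i ≫ f = c'.leg i

/-- The Van Kampen property of a cocone `c`: the functor `κ*`, given by pulling back
objects of the slice category over the apex along all the cocone legs, is an
equivalence between the slice category and the category of cartesian natural
transformations into `D`.  (We phrase this as: there is an equivalence `F` which is,
objectwise and morphismwise, given by pullback along the legs.) -/
def GCocone.IsVanKampen {D : GDiagram I C} (c : GCocone D) : Prop :=
  ∃ (F : Over c.pt ⥤ CartObj D)
    (π : (σ : Over c.pt) → (i : I.V) → ((F.obj σ).diag.obj i ⟶ σ.left)),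
    (∀ (σ : Over c.pt) (i : I.V),
        IsPullback (π σ i) ((F.obj σ).hom.app i) σ.hom (c.leg i)) ∧
    (∀ {σ σ' : Over c.pt} (γ : σ ⟶ σ') (i : I.V),
        ((F.map γ).1.app i) ≫ π σ' i = π σ i ≫ γ.left) ∧
    F.IsEquivalence

end Core
section Paths

variable {B : Type u} [SmallCategory B] {I : MGraph.{u}}

/-- An element of some component of the diagram `D`, at sort `X`
(the components are regarded as disjoint, so each element is tagged with its index). -/
def Elt (D : GDiagram I (B ⥤ Type u)) (X : B) : Type u :=
  Σ i : I.V, (D.obj i).obj X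

/-- A path segment of sort `X` in the diagram `D`: a triple `(y, δ, y')` with
`δ` an edge (`fwd`) or a formally reversed edge (`bwd`) of the shape graph. -/
inductive Seg (D : GDiagram I (B ⥤ Type u)) (X : B) : Type u
  | fwd (d : I.E) (y : (D.obj (I.s d)).obj X)
  | bwd (d : I.E) (y : (D.obj (I.s d)).obj X)

namespace Seg

variable {D : GDiagram I (B ⥤ Type u)} {X : B}

/-- The first component of a path segment. -/
def src : Seg D X → Elt D X
  | fwd d y => ⟨I.s d, y⟩
  | bwd d y => ⟨I.t d, (D.map d).app X y⟩

/-- The third component of a path segment. -/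
def tgt : Seg D X → Elt D X
  | fwd d y => ⟨I.t d, (D.map d).app X y⟩
  | bwd d y => ⟨I.s d, y⟩

/-- The reversed segment: `(y, δ, y') ↦ (y', δᵒᵖ, y)`. -/
def rev : Seg D X → Seg D X
  | fwd d y => bwd d y
  | bwd d y => fwd d y

/-- Two segments are weakly equal if they are equal or each is the reverse of the other. -/
def WeaklyEq (a b : Seg D X) : Prop := a = b ∨ a = b.rev

end Seg

variable {D : GDiagram I (B ⥤ Type u)} {X : B}

/-- `p` is a mapping path of sort `X` connecting `z` with `z'`:  a finite sequence of
path segments in which consecutive segments share endpoints, starting at `z` and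
ending at `z'`; the empty path connects each element with itself. -/
def IsMPath (p : List (Seg D X)) (z z' : Elt D X) : Prop :=
  p.Chain' (fun a b => a.tgt = b.src) ∧
  (p = [] → z = z') ∧
  ∀ h : p ≠ [], (p.head h).src = z ∧ (p.getLast h).tgt = z'

/-- A mapping path is proper if no two distinct segments of it are weakly equal. -/
def ProperPath (p : List (Seg D X)) : Prop :=
  p.Pairwise (fun a b => ¬ Seg.WeaklyEq a b)

/-- Two mapping paths are disjoint if no segment of one is weakly equal to a segment
of the other. -/
def DisjointPaths (p q : List (Seg D X)) : Prop :=
  ∀ a ∈ p, ∀ b ∈ q, ¬ Seg.WeaklyEq a b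

/-- A mapping path `p` starting at `z` is inner-cycle free if `yᵢ ≠ yⱼ` for all
`0 ≤ i < j ≤ n` with `j - i ≤ n - 1`, where `y₀ = z, y₁, …, yₙ` is the sequence of
elements visited by the path. -/
def InnerCycleFree (p : List (Seg D X)) (z : Elt D X) : Prop :=
  ∀ (i j : ℕ), (_ : i < j) → (_ : j ≤ p.length) → j - i ≤ p.length - 1 →
    (z :: p.map Seg.tgt).get ⟨i, by simp only [List.length_cons, List.length_map]; omega⟩ ≠
    (z :: p.map Seg.tgt).get ⟨j, by simp only [List.length_cons, List.length_map]; omega⟩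

end Paths
section GraphNotions

/-- The cyclic successor of `j : Fin n`. -/
def fcsucc {n : ℕ} (hn : 0 < n) (j : Fin n) : Fin n := ⟨(j.1 + 1) % n, Nat.mod_lt _ hn⟩

/-- `IsEdgeSeq I l i j` : `l` is a sequence of edges of `I` leading from `i` to `j`. -/
def IsEdgeSeq (I : MGraph.{u}) : List I.E → I.V → I.V → Prop
  | [], i, j => i = j
  | e :: l, i, j => I.s e = i ∧ IsEdgeSeq I l (I.t e) j

/-- A vertex is minimal if it has no outgoing edges. -/
def MGraph.Minimal (I : MGraph.{u}) (i : I.V) : Prop := ∀ e : I.E, I.s e ≠ i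

/-- A vertex is branching if it has at least two outgoing edges. -/
def MGraph.Branching (I : MGraph.{u}) (i : I.V) : Prop :=
  ∃ e e' : I.E, e ≠ e' ∧ I.s e = i ∧ I.s e' = i

/-- A branch is a nonempty edge sequence from a branching vertex to a minimal vertex. -/
def IsBranch (I : MGraph.{u}) (p : List I.E) (i j : I.V) : Prop :=
  I.Branching i ∧ I.Minimal j ∧ p ≠ [] ∧ IsEdgeSeq I p i j

/-- A minimal vertex is affected if it is the target of some branch. -/
def MGraph.Affected (I : MGraph.{u}) (j : I.V) : Prop := ∃ p i, IsBranch I p i j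

/-- A directed cycle: pairwise distinct edges `d₀, …, d_{n-1}` (`n ≥ 1`) with
`t(d_{k-1}) = s(d_{k mod n})`. -/
def MGraph.HasDirectedCycle (I : MGraph.{u}) : Prop :=
  ∃ (n : ℕ) (hn : 1 ≤ n) (d : Fin n → I.E), Function.Injective d ∧
    ∀ k : Fin n, I.t (d k) = I.s (d (fcsucc (by omega) k))

/-- The set of endpoints of an edge. -/
def MGraph.ends (I : MGraph.{u}) (e : I.E) : Set I.V := {I.s e, I.t e}

/-- An undirected cycle: pairwise distinct edges `d₀, …, d_{n-1}` (`n ≥ 2`) such that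
cyclically consecutive edges share an endpoint. -/
def IsUndirectedCycle (I : MGraph.{u}) {n : ℕ} (hn : 2 ≤ n) (d : Fin n → I.E) : Prop :=
  Function.Injective d ∧
    ∀ k : Fin n, (I.ends (d k) ∩ I.ends (d (fcsucc (by omega) k))).Nonempty

variable {B : Type u} [SmallCategory B] {I : MGraph.{u}}

/-- `Evals D X l z w` : applying, at sort `X`, the composite of the maps `D_d` along
the edge sequence `l` to the element `z` yields the element `w`. -/
inductive Evals (D : GDiagram I (B ⥤ Type u)) (X : B) :
    List I.E → Elt D X → Elt D X → Prop
  | nil (z : Elt D X) : Evals D X [] z z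
  | cons (e : I.E) (y : (D.obj (I.s e)).obj X) {l : List I.E} {w : Elt D X} :
      Evals D X l ⟨I.t e, (D.map e).app X y⟩ w → Evals D X (e :: l) ⟨I.s e, y⟩ w

/-- `D` is image-disjoint: for each pair of different branches `p, p'` starting at the
same branching vertex `i` and every `y ∈ D_i(X)`, we have `D_p(y) ≠ D_{p'}(y)`. -/
def ImageDisjoint (D : GDiagram I (B ⥤ Type u)) : Prop :=
  ∀ (i j j' : I.V) (p p' : List I.E), IsBranch I p i j → IsBranch I p' i j' → p ≠ p' →
    ∀ (X : B) (y : (D.obj i).obj X) (w w' : Elt D X),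
      Evals D X p ⟨i, y⟩ w → Evals D X p' ⟨i, y⟩ w' → w ≠ w'

end GraphNotions

noncomputable section VKAux

open Relation

section Cycles
variable {I : MGraph.{u}}

/-- vertex-level step relation -/
def VStep (I : MGraph.{u}) (i j : I.V) : Prop := ∃ e : I.E, I.s e = i ∧ I.t e = j

lemma isEdgeSeq_append {l : List I.E} {i j : I.V} (h : IsEdgeSeq I l i j) (e : I.E)
    (he : I.s e = j) : IsEdgeSeq I (l ++ [e]) i (I.t e) := by
  induction l generalizing i with
  | nil => exact ⟨by rw [he, h], rfl⟩
  | cons a l ih => exact ⟨h.1, ih h.2⟩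

lemma transGen_edgeSeq {i j : I.V} (h : TransGen (VStep I) i j) :
    ∃ l : List I.E, l ≠ [] ∧ IsEdgeSeq I l i j := by
  induction h with
  | single h => obtain ⟨e, h1, h2⟩ := h; exact ⟨[e], by simp, h1, h2⟩
  | tail _ h ih =>
      obtain ⟨l, hne, hl⟩ := ih
      obtain ⟨e, h1, h2⟩ := h
      exact ⟨l ++ [e], by simp, h2 ▸ isEdgeSeq_append hl e h1⟩

lemma edgeSeq_src {l : List I.E} {i j : I.V} (h : IsEdgeSeq I l i j) (hne : l ≠ []) :
    I.s (l.get ⟨0, List.length_pos_iff.2 hne⟩) = i := by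
  cases l with
  | nil => exact absurd rfl hne
  | cons a l => exact h.1

lemma edgeSeq_chain {l : List I.E} {i j : I.V} (h : IsEdgeSeq I l i j) :
    ∀ (k : ℕ) (hk : k + 1 < l.length),
      I.t (l.get ⟨k, by omega⟩) = I.s (l.get ⟨k + 1, hk⟩) := by
  induction l generalizing i with
  | nil => intro k hk; simp at hk
  | cons a l ih =>
      intro k hk
      cases k with
      | zero =>
          have hl : l ≠ [] := by
            intro h0
            rw [h0] at hk
            simp at hk
          have := edgeSeq_src h.2 hl
          simpa using this.symm
      | succ k =>
          have hk' : k + 1 < l.length := by simpa using hk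
          simpa using ih h.2 k hk'

lemma edgeSeq_last {l : List I.E} {i j : I.V} (h : IsEdgeSeq I l i j) (hne : l ≠ []) :
    I.t (l.get ⟨l.length - 1, by have := List.length_pos_iff.2 hne; omega⟩) = j := by
  induction l generalizing i with
  | nil => exact absurd rfl hne
  | cons a l ih =>
      cases l with
      | nil => exact h.2
      | cons b l' =>
          have := ih h.2 (by simp)
          simpa using this

lemma closedWalk_cycle (hnc : ¬ I.HasDirectedCycle) :
    ∀ (n : ℕ) (hn : 0 < n) (w : Fin n → I.E),
      (∀ k : Fin n, I.t (w k) = I.s (w (fcsucc hn k))) → False := by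
  intro n
  induction n using Nat.strong_induction_on with
  | _ n ih =>
    intro hn w hw
    by_cases hinj : Function.Injective w
    · exact hnc ⟨n, hn, w, hinj, fun k => hw k⟩
    · obtain ⟨a, b, hab, hne⟩ := Function.not_injective_iff.1 hinj
      have key : ∀ a b : Fin n, w a = w b → a.1 < b.1 → False := by
        intro a b hab hlt
        set m := b.1 - a.1 with hm_def
        have hm : 0 < m := by omega
        have hmn : m < n := by omega
        set w' : Fin m → I.E := fun k => w ⟨a.1 + k.1, by omega⟩ with hw'_def
        refine ih m hmn hm w' ?_
        intro k
        by_cases hk : k.1 + 1 < m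
        · have hsc : fcsucc hm k = ⟨k.1 + 1, hk⟩ := Fin.ext (Nat.mod_eq_of_lt hk)
          rw [hsc]
          have hsc' : fcsucc hn ⟨a.1 + k.1, by omega⟩ = ⟨a.1 + k.1 + 1, by omega⟩ :=
            Fin.ext (show (a.1 + k.1 + 1) % n = a.1 + k.1 + 1 from Nat.mod_eq_of_lt (by omega))
          have := hw ⟨a.1 + k.1, by omega⟩
          rw [hsc'] at this
          exact this
        · have hk1 : k.1 + 1 = m := by have := k.2; omega
          have hsc : fcsucc hm k = ⟨0, hm⟩ := Fin.ext (by simp [fcsucc, hk1])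
          rw [hsc]
          have h1 : w' k = w ⟨b.1 - 1, by omega⟩ := by
            apply congrArg w
            exact Fin.ext (by simp only []; omega)
          have h2 : w' ⟨0, hm⟩ = w b := by
            rw [hw'_def]
            simp only []
            rw [← hab]
            exact congrArg w (Fin.ext (by simp))
          rw [h1, h2]
          have hsc' : fcsucc hn ⟨b.1 - 1, by omega⟩ = b := by
            apply Fin.ext
            show (b.1 - 1 + 1) % n = b.1
            have hb : b.1 - 1 + 1 = b.1 := by omega
            rw [hb, Nat.mod_eq_of_lt b.2]
          have := hw ⟨b.1 - 1, by omega⟩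
          exact this.trans (congrArg (fun x => I.s (w x)) hsc')
      rcases lt_trichotomy a.1 b.1 with h | h | h
      · exact key a b hab h
      · exact hne (Fin.ext h)
      · exact key b a hab.symm h

lemma no_trans_cycle (hnc : ¬ I.HasDirectedCycle) (i : I.V) : ¬ TransGen (VStep I) i i := by
  intro h
  obtain ⟨l, hne, hl⟩ := transGen_edgeSeq h
  have hn : 0 < l.length := List.length_pos_iff.2 hne
  apply closedWalk_cycle hnc l.length hn l.get
  intro k
  by_cases hk : k.1 + 1 < l.length
  · have hsc : fcsucc hn k = ⟨k.1 + 1, hk⟩ := Fin.ext (Nat.mod_eq_of_lt hk)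
    rw [hsc]
    exact edgeSeq_chain hl k.1 hk
  · have hk1 : k.1 = l.length - 1 := by have := k.2; omega
    have hsc : fcsucc hn k = ⟨0, hn⟩ := by
      apply Fin.ext
      show (k.1 + 1) % l.length = 0
      have h2 : k.1 + 1 = l.length := by omega
      rw [h2, Nat.mod_self]
    have h4 : l.get k = l.get ⟨l.length - 1, by omega⟩ := congrArg l.get (Fin.ext hk1)
    rw [hsc, h4, edgeSeq_last hl hne]
    exact (edgeSeq_src hl hne).symm

lemma no_branch_eq (hnb : ∀ i : I.V, ¬ I.Branching i) {e e' : I.E} (h : I.s e = I.s e') :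
    e = e' := by
  by_contra hne
  exact hnb (I.s e) ⟨e, e', hne, rfl, h.symm⟩

end Cycles
end VKAux
noncomputable section VKPartA

variable {I : MGraph.{u}} {C : Type*} [Category C] [HasPullbacks C]
variable (D : GDiagram I C) (c : GCocone D)

/-- object part of the pullback functor -/
def vkObj (σ : Over c.pt) : CartObj D where
  diag :=
    { obj := fun i => pullback σ.hom (c.leg i)
      map := fun e => pullback.lift (pullback.fst _ _) (pullback.snd _ _ ≫ D.map e)
        (by rw [Category.assoc, c.comm e, pullback.condition]) }
  hom :=
    { app := fun i => pullback.snd _ _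
      naturality := fun e => by simp [pullback.lift_snd] }
  cart := fun e => by
    refine IsPullback.of_right ?_ (by simp [pullback.lift_snd]) (IsPullback.of_hasPullback σ.hom (c.leg (I.t e)))
    rw [pullback.lift_fst]
    have h : c.leg (I.s e) = D.map e ≫ c.leg (I.t e) := (c.comm e).symm
    exact h ▸ IsPullback.of_hasPullback σ.hom (c.leg (I.s e))

def vkMap {σ σ' : Over c.pt} (γ : σ ⟶ σ') : vkObj D c σ ⟶ vkObj D c σ' :=
  ⟨{ app := fun i => pullback.lift (pullback.fst _ _ ≫ γ.left) (pullback.snd _ _)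
        (by refine (Category.assoc _ _ _).trans ?_; rw [Over.w γ]; exact pullback.condition)
     naturality := fun e => by
        apply pullback.hom_ext <;> simp [vkObj, pullback.lift_fst, pullback.lift_snd, pullback.lift_fst_assoc, pullback.lift_snd_assoc] },
   fun i => by simp [vkObj, pullback.lift_snd]⟩

def vkFunctor : Over c.pt ⥤ CartObj D where
  obj := vkObj D c
  map := vkMap D c
  map_id σ := by
    have hid : ∀ (A : CartObj D) (i : I.V), (𝟙 A : A ⟶ A).1.app i = 𝟙 _ := fun _ _ => rfl
    apply Subtype.ext; apply GHom.ext; funext i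
    apply pullback.hom_ext <;> simp [vkMap, vkObj, cartObjCategory, hid, pullback.lift_fst, pullback.lift_snd, pullback.lift_fst_assoc, pullback.lift_snd_assoc]
  map_comp γ δ := by
    have hcomp : ∀ {A A' A'' : CartObj D} (φ : A ⟶ A') (ψ : A' ⟶ A'') (i : I.V),
        (φ ≫ ψ).1.app i = φ.1.app i ≫ ψ.1.app i := fun _ _ _ => rfl
    apply Subtype.ext; apply GHom.ext; funext i
    apply pullback.hom_ext <;> simp [vkMap, vkObj, cartObjCategory, hcomp, pullback.lift_fst, pullback.lift_snd, pullback.lift_fst_assoc, pullback.lift_snd_assoc]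

theorem vk_pb (σ : Over c.pt) (i : I.V) :
    IsPullback (pullback.fst σ.hom (c.leg i)) (((vkFunctor D c).obj σ).hom.app i) σ.hom
      (c.leg i) :=
  IsPullback.of_hasPullback _ _

theorem vk_nat {σ σ' : Over c.pt} (γ : σ ⟶ σ') (i : I.V) :
    (((vkFunctor D c).map γ).1.app i) ≫ pullback.fst σ'.hom (c.leg i) =
      pullback.fst σ.hom (c.leg i) ≫ γ.left := by
  exact pullback.lift_fst _ _ _

end VKPartA
noncomputable section VKPartB

open Relation

variable {B : Type u} [SmallCategory B] {I : MGraph.{u}}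

/-- One reduction step between elements of a diagram. -/
def SStep (D : GDiagram I (B ⥤ Type u)) (X : B) (z z' : Elt D X) : Prop :=
  ∃ (e : I.E) (y : (D.obj (I.s e)).obj X),
    z = ⟨I.s e, y⟩ ∧ z' = ⟨I.t e, (D.map e).app X y⟩

variable {D : GDiagram I (B ⥤ Type u)}

def eltMap (D : GDiagram I (B ⥤ Type u)) {X Y : B} (f : X ⟶ Y) : Elt D X → Elt D Y :=
  fun z => ⟨z.1, (D.obj z.1).map f z.2⟩

lemma sstep_map {X Y : B} (f : X ⟶ Y) {z z' : Elt D X} (h : SStep D X z z') :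
    SStep D Y (eltMap D f z) (eltMap D f z') := by
  obtain ⟨e, y, rfl, rfl⟩ := h
  refine ⟨e, (D.obj (I.s e)).map f y, rfl, ?_⟩
  show (⟨I.t e, (D.obj (I.t e)).map f ((D.map e).app X y)⟩ : Elt D Y) = _
  exact congrArg (Sigma.mk (I.t e)) (NatTrans.naturality_apply (D.map e) f y).symm

lemma sstep_vstep {X : B} {z z' : Elt D X} (h : SStep D X z z') : VStep I z.1 z'.1 := by
  obtain ⟨e, y, rfl, rfl⟩ := h
  exact ⟨e, rfl, rfl⟩

lemma sstep_det (hnb : ∀ i : I.V, ¬ I.Branching i) {X : B} {z z₁ z₂ : Elt D X}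
    (h1 : SStep D X z z₁) (h2 : SStep D X z z₂) : z₁ = z₂ := by
  obtain ⟨e, y, rfl, rfl⟩ := h1
  obtain ⟨e', y', hz, rfl⟩ := h2
  have hse : I.s e = I.s e' := congrArg Sigma.fst hz
  obtain rfl : e' = e := no_branch_eq hnb hse.symm
  obtain rfl : y = y' := eq_of_heq (Sigma.mk.inj_iff.1 hz).2
  rfl

lemma rtg_linear (hnb : ∀ i : I.V, ¬ I.Branching i) {X : B} {a b c' : Elt D X}
    (h1 : ReflTransGen (SStep D X) a b) (h2 : ReflTransGen (SStep D X) a c') :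
    ReflTransGen (SStep D X) b c' ∨ ReflTransGen (SStep D X) c' b := by
  induction h1 using ReflTransGen.head_induction_on generalizing c' with
  | refl => exact Or.inl h2
  | head hstep htail ih =>
      rcases h2.cases_head with rfl | ⟨d, hd, hdc⟩
      · exact Or.inr (ReflTransGen.head hstep htail)
      · obtain rfl := sstep_det hnb hstep hd
        exact ih hdc

lemma eqvGen_join (hnb : ∀ i : I.V, ¬ I.Branching i) {X : B} {z z' : Elt D X}
    (h : EqvGen (SStep D X) z z') :
    ∃ w, ReflTransGen (SStep D X) z w ∧ ReflTransGen (SStep D X) z' w := by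
  induction h with
  | rel a b hab => exact ⟨b, ReflTransGen.single hab, ReflTransGen.refl⟩
  | refl a => exact ⟨a, ReflTransGen.refl, ReflTransGen.refl⟩
  | symm a b _ ih => obtain ⟨w, ha, hb⟩ := ih; exact ⟨w, hb, ha⟩
  | trans a b c' _ _ ih1 ih2 =>
      obtain ⟨w, h1, h2⟩ := ih1
      obtain ⟨w', h3, h4⟩ := ih2
      rcases rtg_linear hnb h2 h3 with h | h
      · exact ⟨w', h1.trans h, h4⟩
      · exact ⟨w, h1, h4.trans h⟩

lemma rtg_eqvGen {α : Type*} {r : α → α → Prop} {a b : α} (h : ReflTransGen r a b) :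
    EqvGen r a b := by
  induction h with
  | refl => exact EqvGen.refl a
  | tail _ h ih => exact EqvGen.trans _ _ _ ih (EqvGen.rel _ _ h)

/-- the explicit colimit presheaf of a diagram -/
def colimQ (D : GDiagram I (B ⥤ Type u)) : B ⥤ Type u where
  obj X := Quot (SStep D X)
  map {X Y} f := ↾(Quot.map (eltMap D f) (fun _ _ h => sstep_map f h))
  map_id X := by
    ext q
    induction q using Quot.ind with
    | _ z =>
      show Quot.mk _ (eltMap D (𝟙 X) z) = Quot.mk _ z
      cases z with
      | mk i x => simp [eltMap]
  map_comp {X Y Z} f g := by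
    ext q
    induction q using Quot.ind with
    | _ z =>
      show Quot.mk _ (eltMap D (f ≫ g) z) = Quot.mk _ (eltMap D g (eltMap D f z))
      cases z with
      | mk i x => simp [eltMap]; rfl

def colimLeg (D : GDiagram I (B ⥤ Type u)) (i : I.V) : D.obj i ⟶ colimQ D where
  app X := ↾fun x => Quot.mk _ ⟨i, x⟩
  naturality X Y f := rfl

lemma colimLeg_comm (D : GDiagram I (B ⥤ Type u)) (e : I.E) :
    D.map e ≫ colimLeg D (I.t e) = colimLeg D (I.s e) := by
  ext X y
  exact (Quot.sound ⟨e, y, rfl, rfl⟩).symm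

variable {D : GDiagram I (B ⥤ Type u)} (c : GCocone D)

def descQ : colimQ D ⟶ c.pt where
  app X := ↾Quot.lift (fun z => (c.leg z.1).app X z.2) (by
    rintro z z' ⟨e, y, rfl, rfl⟩
    exact (types_congr_hom (congrArg (fun (α : D.obj (I.s e) ⟶ c.pt) => α.app X) (c.comm e)) y).symm)
  naturality X Y f := by
    ext q
    induction q using Quot.ind with
    | _ z => exact NatTrans.naturality_apply (c.leg z.1) f z.2

lemma colimLeg_descQ (i : I.V) : colimLeg D i ≫ descQ c = c.leg i := rfl

variable {c}

lemma comparisonQ (hc : c.IsColimit) :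
    ∃ f : c.pt ⟶ colimQ D, (∀ i, c.leg i ≫ f = colimLeg D i) ∧ f ≫ descQ c = 𝟙 c.pt := by
  obtain ⟨f, hf, -⟩ := hc ⟨colimQ D, colimLeg D, colimLeg_comm D⟩
  refine ⟨f, hf, ?_⟩
  obtain ⟨g, hg, hu⟩ := hc c
  have e1 := hu (f ≫ descQ c) (fun i => by rw [← Category.assoc, hf i, colimLeg_descQ])
  have e2 := hu (𝟙 c.pt) (fun i => Category.comp_id _)
  exact e1.trans e2.symm

lemma leg_jointly_surj (hc : c.IsColimit) (X : B) (s : c.pt.obj X) :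
    ∃ z : Elt D X, (c.leg z.1).app X z.2 = s := by
  obtain ⟨f, hleg, hfd⟩ := comparisonQ hc
  obtain ⟨z, hz⟩ := Quot.exists_rep (f.app X s)
  refine ⟨z, ?_⟩
  have h1 : (descQ c).app X (f.app X s) = s :=
    types_congr_hom (congrArg (fun (α : c.pt ⟶ c.pt) => α.app X) hfd) s
  rw [← hz] at h1
  exact h1

lemma leg_eq_iff (hc : c.IsColimit) (X : B) (z z' : Elt D X) :
    (c.leg z.1).app X z.2 = (c.leg z'.1).app X z'.2 ↔ EqvGen (SStep D X) z z' := by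
  obtain ⟨f, hleg, -⟩ := comparisonQ hc
  constructor
  · intro h
    have h1 : f.app X ((c.leg z.1).app X z.2) = Quot.mk _ z :=
      types_congr_hom (congrArg (fun (α : D.obj z.1 ⟶ colimQ D) => α.app X) (hleg z.1)) z.2
    have h2 : f.app X ((c.leg z'.1).app X z'.2) = Quot.mk _ z' :=
      types_congr_hom (congrArg (fun (α : D.obj z'.1 ⟶ colimQ D) => α.app X) (hleg z'.1)) z'.2
    rw [h] at h1
    exact Quot.eq.1 (h1.symm.trans h2)
  · intro h
    induction h with
    | rel a b hab =>
        obtain ⟨e, y, rfl, rfl⟩ := hab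
        exact (types_congr_hom (congrArg (fun (α : D.obj (I.s e) ⟶ c.pt) => α.app X) (c.comm e))
          y).symm
    | refl a => rfl
    | symm a b _ ih => exact ih.symm
    | trans a b c' _ _ ih1 ih2 => exact ih1.trans ih2

end VKPartB
noncomputable section VKPartB2

open Relation

lemma isPullback_elt {P A' B' C' : Type u} {p : P ⟶ A'} {q : P ⟶ B'} {f : A' ⟶ C'} {g : B' ⟶ C'}
    (h : IsPullback p q f g) (a : A') (b : B') (hab : f a = g b) :
    ∃! x : P, p x = a ∧ q x = b := by
  let α : PUnit.{u+1} ⟶ A' := ↾fun _ => a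
  let β : PUnit.{u+1} ⟶ B' := ↾fun _ => b
  have w : α ≫ f = β ≫ g := by ext; exact hab
  refine ⟨h.lift α β w PUnit.unit,
    ⟨types_congr_hom (h.lift_fst α β w) PUnit.unit, types_congr_hom (h.lift_snd α β w) PUnit.unit⟩, ?_⟩
  rintro x ⟨hx1, hx2⟩
  have hk := h.hom_ext (k := ↾fun _ : PUnit.{u+1} => x) (l := h.lift α β w)
    (by ext; exact hx1.trans (types_congr_hom (h.lift_fst α β w) PUnit.unit).symm)
    (by ext; exact hx2.trans (types_congr_hom (h.lift_snd α β w) PUnit.unit).symm)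
  exact types_congr_hom hk PUnit.unit

variable {B : Type u} [SmallCategory B] {I : MGraph.{u}} {D : GDiagram I (B ⥤ Type u)}

lemma cart_elt (A : CartObj D) (e : I.E) (X : B)
    (y₁ : (A.diag.obj (I.t e)).obj X) (y₀ : (D.obj (I.s e)).obj X)
    (h : (A.hom.app (I.t e)).app X y₁ = (D.map e).app X y₀) :
    ∃! x : (A.diag.obj (I.s e)).obj X,
      (A.diag.map e).app X x = y₁ ∧ (A.hom.app (I.s e)).app X x = y₀ :=
  isPullback_elt ((A.cart e).map ((evaluation B (Type u)).obj X)) y₁ y₀ h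

/-- push an element of the subdiagram down to the base diagram -/
def tproj (A : CartObj D) {X : B} (z : Elt A.diag X) : Elt D X :=
  ⟨z.1, (A.hom.app z.1).app X z.2⟩

lemma tproj_app (A : CartObj D) {X : B} (e : I.E) (y : (A.diag.obj (I.s e)).obj X) :
    (A.hom.app (I.t e)).app X ((A.diag.map e).app X y) =
      (D.map e).app X ((A.hom.app (I.s e)).app X y) := by
  exact types_congr_hom (congrArg (fun (α : A.diag.obj (I.s e) ⟶ D.obj (I.t e)) => α.app X)
    (A.hom.naturality e)) y

lemma sstep_tproj (A : CartObj D) {X : B} {z z' : Elt A.diag X}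
    (h : SStep A.diag X z z') : SStep D X (tproj A z) (tproj A z') := by
  obtain ⟨e, y, rfl, rfl⟩ := h
  refine ⟨e, (A.hom.app (I.s e)).app X y, rfl, ?_⟩
  show (⟨I.t e, (A.hom.app (I.t e)).app X ((A.diag.map e).app X y)⟩ : Elt D X) = _
  exact congrArg (Sigma.mk (I.t e)) (tproj_app A e y)

lemma rtg_tproj (A : CartObj D) {X : B} {z w : Elt A.diag X}
    (h : ReflTransGen (SStep A.diag X) z w) :
    ReflTransGen (SStep D X) (tproj A z) (tproj A w) :=
  ReflTransGen.lift (tproj A) (fun _ _ h => sstep_tproj A h) _ _ h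

/-- reductions in the base diagram lift (existence) against a cartesian transformation -/
lemma lift_exists (A : CartObj D) {X : B} {z w : Elt D X}
    (h : ReflTransGen (SStep D X) z w) (u : (A.diag.obj w.1).obj X)
    (hu : (A.hom.app w.1).app X u = w.2) :
    ∃ y : (A.diag.obj z.1).obj X, (A.hom.app z.1).app X y = z.2 ∧
      ReflTransGen (SStep A.diag X) ⟨z.1, y⟩ ⟨w.1, u⟩ := by
  induction h using ReflTransGen.head_induction_on with
  | refl => exact ⟨u, hu, ReflTransGen.refl⟩
  | head hstep htail ih =>
      obtain ⟨e, y₀, rfl, rfl⟩ := hstep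
      obtain ⟨y₁, hy₁, hrtg⟩ := ih
      obtain ⟨x, ⟨hx1, hx2⟩, -⟩ := cart_elt A e X y₁ y₀ (by rw [hy₁])
      exact ⟨x, hx2, ReflTransGen.head ⟨e, x, rfl, congrArg (Sigma.mk (I.t e)) hx1.symm⟩ hrtg⟩

/-- reductions in the base diagram starting from a projected element lift forwards -/
lemma push_lift (A : CartObj D) {X : B} {z₀ w : Elt D X}
    (h : ReflTransGen (SStep D X) z₀ w) :
    ∀ z : Elt A.diag X, tproj A z = z₀ →
      ∃ u : (A.diag.obj w.1).obj X, (A.hom.app w.1).app X u = w.2 ∧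
        ReflTransGen (SStep A.diag X) z ⟨w.1, u⟩ := by
  induction h using ReflTransGen.head_induction_on with
  | refl =>
      intro z hz
      subst hz
      exact ⟨z.2, rfl, by rw [show (⟨(tproj A z).1, z.2⟩ : Elt A.diag X) = z from rfl]⟩
  | head hstep htail ih =>
      intro z hz
      obtain ⟨e, y₀, hz₀, rfl⟩ := hstep
      obtain ⟨zi, zy⟩ := z
      rw [hz₀] at hz
      have h1 : zi = I.s e := congrArg Sigma.fst hz
      subst h1
      have h2 : (A.hom.app (I.s e)).app X zy = y₀ := eq_of_heq (Sigma.mk.inj_iff.1 hz).2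
      obtain ⟨u, hu, hrtg⟩ := ih ⟨I.t e, (A.diag.map e).app X zy⟩
        (by
          show (⟨I.t e, (A.hom.app (I.t e)).app X ((A.diag.map e).app X zy)⟩ : Elt D X) = _
          rw [tproj_app A e zy, h2])
      exact ⟨u, hu, ReflTransGen.head ⟨e, zy, rfl, rfl⟩ hrtg⟩

/-- uniqueness of lifts : two elements over the same vertex with the same projection
reducing to a common element are equal -/
lemma lift_unique (hnb : ∀ i : I.V, ¬ I.Branching i) (hnc : ¬ I.HasDirectedCycle)
    (A : CartObj D) {X : B} {w : Elt A.diag X} {a : Elt A.diag X}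
    (h : ReflTransGen (SStep A.diag X) a w) :
    ∀ y' : (A.diag.obj a.1).obj X,
      (A.hom.app a.1).app X y' = (A.hom.app a.1).app X a.2 →
      ReflTransGen (SStep A.diag X) ⟨a.1, y'⟩ w → (⟨a.1, y'⟩ : Elt A.diag X) = a := by
  induction h using ReflTransGen.head_induction_on with
  | refl =>
      intro y' hτ h'
      rcases reflTransGen_iff_eq_or_transGen.1 h' with h0 | h0
      · exact h0.symm
      · exfalso
        have hv : TransGen (VStep I) w.1 w.1 := by
          have := TransGen.lift (f := fun (z : Elt A.diag X) => z.1)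
            (fun _ _ h => sstep_vstep h) _ _ h0
          exact this
        exact no_trans_cycle hnc w.1 hv
  | head hstep htail ih =>
      intro y' hτ h'
      obtain ⟨e, y₀, rfl, rfl⟩ := hstep
      rcases h'.cases_head with h0 | ⟨d, hd, hdw⟩
      · exfalso
        have hcyc : TransGen (SStep A.diag X) ⟨I.s e, y₀⟩ w :=
          TransGen.head' ⟨e, y₀, rfl, rfl⟩ htail
        have hv : TransGen (VStep I) (I.s e) w.1 :=
          TransGen.lift (f := fun (z : Elt A.diag X) => z.1)
            (fun _ _ h => sstep_vstep h) _ _ hcyc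
        rw [← h0] at hv
        exact no_trans_cycle hnc (I.s e) hv
      · obtain ⟨e', y₁, hz, rfl⟩ := hd
        have hse : I.s e = I.s e' := congrArg Sigma.fst hz
        obtain rfl : e = e' := no_branch_eq hnb hse
        obtain rfl : y' = y₁ := eq_of_heq (Sigma.mk.inj_iff.1 hz).2
        have hτ' : (A.hom.app (I.t e)).app X ((A.diag.map e).app X y') =
            (A.hom.app (I.t e)).app X ((A.diag.map e).app X y₀) := by
          rw [tproj_app A e y', tproj_app A e y₀, hτ]
        have heq := ih ((A.diag.map e).app X y') hτ' hdw
        have h3 : (A.diag.map e).app X y' = (A.diag.map e).app X y₀ :=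
          eq_of_heq (Sigma.mk.inj_iff.1 heq).2
        obtain ⟨x, -, hun⟩ := cart_elt A e X ((A.diag.map e).app X y₀)
          ((A.hom.app (I.s e)).app X y₀) (tproj_app A e y₀)
        have e1 := hun y' ⟨h3, hτ⟩
        have e2 := hun y₀ ⟨rfl, rfl⟩
        rw [e1, e2]

end VKPartB2
noncomputable section VKPartB3

open Relation

variable {B : Type u} [SmallCategory B] {I : MGraph.{u}} {D : GDiagram I (B ⥤ Type u)}
  {c : GCocone D}

lemma napp {F G : B ⥤ Type u} {α β : F ⟶ G} (h : α = β) (X : B) (x : F.obj X) :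
    α.app X x = β.app X x := by rw [h]

lemma napp2 {F G H : B ⥤ Type u} {α : F ⟶ G} {β : G ⟶ H} {γ : F ⟶ H} (h : α ≫ β = γ)
    (X : B) (x : F.obj X) : β.app X (α.app X x) = γ.app X x :=
  types_congr_hom (congrArg (fun (μ : F ⟶ H) => μ.app X) h) x

lemma napp3 {F G G' H : B ⥤ Type u} {α : F ⟶ G} {β : G ⟶ H} {γ : F ⟶ G'} {δ : G' ⟶ H}
    (h : α ≫ β = γ ≫ δ) (X : B) (x : F.obj X) :
    β.app X (α.app X x) = δ.app X (γ.app X x) :=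
  types_congr_hom (congrArg (fun (μ : F ⟶ H) => μ.app X) h) x

lemma pb_elt (σ : Over c.pt) (i : I.V) (X : B) (t : σ.left.obj X) (x : (D.obj i).obj X)
    (h : σ.hom.app X t = (c.leg i).app X x) :
    ∃! p : (pullback σ.hom (c.leg i)).obj X,
      (pullback.fst σ.hom (c.leg i)).app X p = t ∧
        (pullback.snd σ.hom (c.leg i)).app X p = x :=
  isPullback_elt ((IsPullback.of_hasPullback σ.hom (c.leg i)).map
    ((evaluation B (Type u)).obj X)) t x h

lemma pb_cond (σ : Over c.pt) (i : I.V) (X : B) (p : (pullback σ.hom (c.leg i)).obj X) :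
    σ.hom.app X ((pullback.fst σ.hom (c.leg i)).app X p) =
      (c.leg i).app X ((pullback.snd σ.hom (c.leg i)).app X p) :=
  napp (pullback.condition (f := σ.hom) (g := c.leg i)) X p

lemma pb_inj (σ : Over c.pt) (i : I.V) (X : B) {p q : (pullback σ.hom (c.leg i)).obj X}
    (h1 : (pullback.fst σ.hom (c.leg i)).app X p = (pullback.fst σ.hom (c.leg i)).app X q)
    (h2 : (pullback.snd σ.hom (c.leg i)).app X p = (pullback.snd σ.hom (c.leg i)).app X q) :
    p = q := by
  obtain ⟨r, -, hun⟩ := pb_elt σ i X ((pullback.fst σ.hom (c.leg i)).app X q)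
    ((pullback.snd σ.hom (c.leg i)).app X q) (pb_cond σ i X q)
  rw [hun p ⟨h1, h2⟩, hun q ⟨rfl, rfl⟩]

lemma vkObj_map_fst (σ : Over c.pt) (e : I.E) :
    (vkObj D c σ).diag.map e ≫ pullback.fst σ.hom (c.leg (I.t e)) =
      pullback.fst σ.hom (c.leg (I.s e)) :=
  pullback.lift_fst _ _ _

lemma vkObj_map_snd (σ : Over c.pt) (e : I.E) :
    (vkObj D c σ).diag.map e ≫ pullback.snd σ.hom (c.leg (I.t e)) =
      pullback.snd σ.hom (c.leg (I.s e)) ≫ D.map e :=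
  pullback.lift_snd _ _ _

/-! ### Faithfulness -/

lemma vk_faithful (hc : c.IsColimit) : (vkFunctor D c).Faithful where
  map_injective {σ σ'} {γ γ'} h := by
    apply Over.OverMorphism.ext
    apply NatTrans.ext
    funext X; ext t
    obtain ⟨z, hz⟩ := leg_jointly_surj hc X (σ.hom.app X t)
    obtain ⟨p, ⟨hp1, hp2⟩, -⟩ := pb_elt σ z.1 X t z.2 hz.symm
    have e1 := napp3 (vk_nat D c γ z.1) X p
    have e2 := napp3 (vk_nat D c γ' z.1) X p
    show γ.left.app X t = γ'.left.app X t
    rw [← hp1]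
    have e3 : ((vkFunctor D c).map γ).1.app z.1 = ((vkFunctor D c).map γ').1.app z.1 := by
      rw [h]
    calc γ.left.app X ((pullback.fst σ.hom (c.leg z.1)).app X p)
        = (pullback.fst σ'.hom (c.leg z.1)).app X
            ((((vkFunctor D c).map γ).1.app z.1).app X p) := e1.symm
      _ = (pullback.fst σ'.hom (c.leg z.1)).app X
            ((((vkFunctor D c).map γ').1.app z.1).app X p) := by rw [e3]
      _ = γ'.left.app X ((pullback.fst σ.hom (c.leg z.1)).app X p) := e2

/-! ### Fullness -/

lemma full_invariance (hc : c.IsColimit) {σ σ' : Over c.pt}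
    (ψ : vkObj D c σ ⟶ vkObj D c σ') {X : B} {z z' : Elt D X}
    (h : EqvGen (SStep D X) z z') :
    ∀ (t : σ.left.obj X) (p : (pullback σ.hom (c.leg z.1)).obj X)
      (p' : (pullback σ.hom (c.leg z'.1)).obj X),
      (pullback.fst σ.hom (c.leg z.1)).app X p = t →
      (pullback.snd σ.hom (c.leg z.1)).app X p = z.2 →
      (pullback.fst σ.hom (c.leg z'.1)).app X p' = t →
      (pullback.snd σ.hom (c.leg z'.1)).app X p' = z'.2 →
      (pullback.fst σ'.hom (c.leg z.1)).app X ((ψ.1.app z.1).app X p) =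
        (pullback.fst σ'.hom (c.leg z'.1)).app X ((ψ.1.app z'.1).app X p') := by
  induction h with
  | refl a =>
      intro t p p' h1 h2 h3 h4
      have : p = p' := pb_inj σ a.1 X (h1.trans h3.symm) (h2.trans h4.symm)
      rw [this]
  | rel a b hab =>
      obtain ⟨e, y, rfl, rfl⟩ := hab
      intro t p p' h1 h2 h3 h4
      dsimp only at h1 h2 h3 h4 ⊢
      have m1 := napp2 (vkObj_map_fst σ e) X p
      have m2 := napp3 (vkObj_map_snd σ e) X p
      have hq : ((vkObj D c σ).diag.map e).app X p = p' := by
        apply pb_inj σ (I.t e) X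
        · erw [m1, h1]; exact h3.symm
        · erw [m2, h2]; exact h4.symm
      rw [← hq]
      have hnat := napp3 (ψ.1.naturality e) X p
      rw [hnat]
      exact (napp2 (vkObj_map_fst σ' e) X ((ψ.1.app (I.s e)).app X p)).symm
  | symm a b _ ih =>
      intro t p p' h1 h2 h3 h4
      exact (ih t p' p h3 h4 h1 h2).symm
  | trans a b c' hab hbc ih1 ih2 =>
      intro t p p' h1 h2 h3 h4
      have hσ : σ.hom.app X t = (c.leg b.1).app X b.2 := by
        have := pb_cond σ a.1 X p
        rw [h1, h2] at this
        exact this.trans ((leg_eq_iff hc X a b).2 hab)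
      obtain ⟨p'', ⟨hp1, hp2⟩, -⟩ := pb_elt σ b.1 X t b.2 hσ
      exact (ih1 t p p'' h1 h2 hp1 hp2).trans (ih2 t p'' p' hp1 hp2 h3 h4)

lemma vk_full (hc : c.IsColimit) : (vkFunctor D c).Full where
  map_surjective {σ σ'} ψ := by
    have hch : ∀ (X : B) (t : σ.left.obj X),
        ∃ (z : Elt D X) (p : (pullback σ.hom (c.leg z.1)).obj X),
          (pullback.fst σ.hom (c.leg z.1)).app X p = t ∧
            (pullback.snd σ.hom (c.leg z.1)).app X p = z.2 := by
      intro X t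
      obtain ⟨z, hz⟩ := leg_jointly_surj hc X (σ.hom.app X t)
      obtain ⟨p, hp, -⟩ := pb_elt σ z.1 X t z.2 hz.symm
      exact ⟨z, p, hp⟩
    choose zf pf hz1 hz2 using hch
    let g : ∀ X : B, σ.left.obj X → σ'.left.obj X := fun X t =>
      (pullback.fst σ'.hom (c.leg (zf X t).1)).app X ((ψ.1.app (zf X t).1).app X (pf X t))
    have spec : ∀ (X : B) (t : σ.left.obj X) (z : Elt D X)
        (p : (pullback σ.hom (c.leg z.1)).obj X),
        (pullback.fst σ.hom (c.leg z.1)).app X p = t →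
        (pullback.snd σ.hom (c.leg z.1)).app X p = z.2 →
        g X t = (pullback.fst σ'.hom (c.leg z.1)).app X ((ψ.1.app z.1).app X p) := by
      intro X t z p h1 h2
      have hσ1 : σ.hom.app X t = (c.leg (zf X t).1).app X (zf X t).2 := by
        have := pb_cond σ (zf X t).1 X (pf X t)
        rwa [hz1 X t, hz2 X t] at this
      have hσ2 : σ.hom.app X t = (c.leg z.1).app X z.2 := by
        have := pb_cond σ z.1 X p
        rwa [h1, h2] at this
      have heq : EqvGen (SStep D X) (zf X t) z :=
        (leg_eq_iff hc X (zf X t) z).1 (hσ1.symm.trans hσ2)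
      exact full_invariance hc ψ heq t (pf X t) p (hz1 X t) (hz2 X t) h1 h2
    have hnat : ∀ {X Y : B} (f : X ⟶ Y) (t : σ.left.obj X),
        g Y (σ.left.map f t) = σ'.left.map f (g X t) := by
      intro X Y f t
      have hq1 : (pullback.fst σ.hom (c.leg (zf X t).1)).app Y
          ((pullback σ.hom (c.leg (zf X t).1)).map f (pf X t)) = σ.left.map f t := by
        rw [NatTrans.naturality_apply (pullback.fst σ.hom (c.leg (zf X t).1)) f (pf X t),
          hz1 X t]
      have hq2 : (pullback.snd σ.hom (c.leg (zf X t).1)).app Y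
          ((pullback σ.hom (c.leg (zf X t).1)).map f (pf X t)) = (eltMap D f (zf X t)).2 := by
        rw [NatTrans.naturality_apply (pullback.snd σ.hom (c.leg (zf X t).1)) f (pf X t),
          hz2 X t]
        rfl
      have h5 := spec Y (σ.left.map f t) (eltMap D f (zf X t)) _ hq1 hq2
      rw [h5]
      show (pullback.fst σ'.hom (c.leg (zf X t).1)).app Y
          ((ψ.1.app (zf X t).1).app Y ((pullback σ.hom (c.leg (zf X t).1)).map f (pf X t))) = _
      erw [NatTrans.naturality_apply (ψ.1.app (zf X t).1) f (pf X t),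
          NatTrans.naturality_apply (pullback.fst σ'.hom (c.leg (zf X t).1)) f]
    let γleft : σ.left ⟶ σ'.left :=
      { app := fun X => ↾(g X),
          naturality := fun {X Y} f => by ext t; exact hnat f t }
    have hover : γleft ≫ σ'.hom = σ.hom := by
      apply NatTrans.ext
      funext X; ext t
      show σ'.hom.app X (g X t) = σ.hom.app X t
      have h6 := pb_cond σ' (zf X t).1 X ((ψ.1.app (zf X t).1).app X (pf X t))
      have h7 : (pullback.snd σ'.hom (c.leg (zf X t).1)).app X
          ((ψ.1.app (zf X t).1).app X (pf X t)) =
          (pullback.snd σ.hom (c.leg (zf X t).1)).app X (pf X t) :=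
        napp2 (ψ.2 (zf X t).1) X (pf X t)
      have hσ1 : σ.hom.app X t = (c.leg (zf X t).1).app X (zf X t).2 := by
        have := pb_cond σ (zf X t).1 X (pf X t)
        rwa [hz1 X t, hz2 X t] at this
      show σ'.hom.app X ((pullback.fst σ'.hom (c.leg (zf X t).1)).app X _) = _
      rw [h6, h7, hz2 X t, ← hσ1]
    refine ⟨Over.homMk γleft hover, ?_⟩
    apply Subtype.ext
    apply GHom.ext
    funext i
    apply NatTrans.ext
    funext X; ext p
    apply pb_inj σ' i X
    · have e1 := napp3 (vk_nat D c (Over.homMk γleft hover) i) X p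
      have e2 := spec X ((pullback.fst σ.hom (c.leg i)).app X p)
        ⟨i, (pullback.snd σ.hom (c.leg i)).app X p⟩ p rfl rfl
      exact e1.trans e2
    · have e1 : (((vkFunctor D c).map (Over.homMk γleft hover)).1.app i) ≫
          pullback.snd σ'.hom (c.leg i) = pullback.snd σ.hom (c.leg i) :=
        ((vkFunctor D c).map (Over.homMk γleft hover)).2 i
      have e2 : ψ.1.app i ≫ pullback.snd σ'.hom (c.leg i) = pullback.snd σ.hom (c.leg i) :=
        ψ.2 i
      exact (napp2 e1 X p).trans (napp2 e2 X p).symm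

end VKPartB3
noncomputable section VKPartB4

open Relation

variable {B : Type u} [SmallCategory B] {I : MGraph.{u}} {D : GDiagram I (B ⥤ Type u)}

/-- the canonical map from the colimit of the subdiagram to the apex -/
def descA (c : GCocone D) (A : CartObj D) : colimQ A.diag ⟶ c.pt where
  app X := ↾Quot.lift (fun z => (c.leg z.1).app X ((A.hom.app z.1).app X z.2)) (by
    rintro z z' ⟨e, y, rfl, rfl⟩
    show (c.leg (I.s e)).app X ((A.hom.app (I.s e)).app X y) =
      (c.leg (I.t e)).app X ((A.hom.app (I.t e)).app X ((A.diag.map e).app X y))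
    have h1 : (c.leg (I.t e)).app X ((A.hom.app (I.t e)).app X ((A.diag.map e).app X y)) =
        (c.leg (I.t e)).app X ((D.map e).app X ((A.hom.app (I.s e)).app X y)) := by
      rw [tproj_app A e y]
    rw [h1]
    exact (napp2 (c.comm e) X ((A.hom.app (I.s e)).app X y)).symm)
  naturality X Y f := by
    ext q
    induction q using Quot.ind with
    | _ z =>
      show (c.leg z.1).app Y ((A.hom.app z.1).app Y ((A.diag.obj z.1).map f z.2)) = _
      rw [NatTrans.naturality_apply (A.hom.app z.1) f,
          NatTrans.naturality_apply (c.leg z.1) f]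
      rfl

variable {c : GCocone D}

lemma descA_mk (A : CartObj D) (X : B) (z : Elt A.diag X) :
    (descA c A).app X (Quot.mk _ z) = (c.leg z.1).app X ((A.hom.app z.1).app X z.2) := rfl

/-- the comparison morphism from a cartesian transformation to the pullback of
the canonical map -/
def phiA (A : CartObj D) : A ⟶ vkObj D c (Over.mk (descA c A)) := by
  refine ⟨{ app := fun i => pullback.lift (colimLeg A.diag i) (A.hom.app i) ?_
            naturality := fun e => ?_ }, fun i => ?_⟩
  · apply NatTrans.ext; funext X; ext x; rfl
  · apply pullback.hom_ext
    · erw [Category.assoc, Category.assoc, pullback.lift_fst]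
      show A.diag.map e ≫ colimLeg A.diag (I.t e) = _
      rw [colimLeg_comm A.diag e]
      have : (vkObj D c (Over.mk (descA c A))).diag.map e ≫
          pullback.fst (Over.mk (descA c A)).hom (c.leg (I.t e)) =
          pullback.fst (Over.mk (descA c A)).hom (c.leg (I.s e)) := vkObj_map_fst _ e
      erw [this, pullback.lift_fst]
    · erw [Category.assoc, Category.assoc, pullback.lift_snd]
      have : (vkObj D c (Over.mk (descA c A))).diag.map e ≫
          pullback.snd (Over.mk (descA c A)).hom (c.leg (I.t e)) =
          pullback.snd (Over.mk (descA c A)).hom (c.leg (I.s e)) ≫ D.map e := vkObj_map_snd _ e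
      erw [this, ← Category.assoc, pullback.lift_snd]
      exact A.hom.naturality e
  · exact pullback.lift_snd _ _ _

lemma phiA_fst (A : CartObj D) (i : I.V) (X : B) (x : (A.diag.obj i).obj X) :
    (pullback.fst (Over.mk (descA c A)).hom (c.leg i)).app X
      (((phiA A).1.app i).app X x) = Quot.mk _ (⟨i, x⟩ : Elt A.diag X) :=
  napp2 (pullback.lift_fst _ _ _) X x

lemma phiA_snd (A : CartObj D) (i : I.V) (X : B) (x : (A.diag.obj i).obj X) :
    (pullback.snd (Over.mk (descA c A)).hom (c.leg i)).app X
      (((phiA A).1.app i).app X x) = (A.hom.app i).app X x :=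
  napp2 (pullback.lift_snd _ _ _) X x

lemma phiA_bij (hnb : ∀ i : I.V, ¬ I.Branching i) (hnc : ¬ I.HasDirectedCycle)
    (hc : c.IsColimit) (A : CartObj D) (i : I.V) (X : B) :
    Function.Bijective (((phiA (c := c) A).1.app i).app X) := by
  constructor
  · intro x x' h
    have h1 : Quot.mk (SStep A.diag X) (⟨i, x⟩ : Elt A.diag X) =
        Quot.mk (SStep A.diag X) (⟨i, x'⟩ : Elt A.diag X) := by
      erw [← phiA_fst A i X x, ← phiA_fst A i X x', h]
    have h2 : (A.hom.app i).app X x = (A.hom.app i).app X x' := by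
      rw [← phiA_snd A i X x, ← phiA_snd A i X x', h]
    obtain ⟨w, hw1, hw2⟩ := eqvGen_join hnb (Quot.eq.1 h1)
    have h3 := lift_unique hnb hnc A hw1 x' h2.symm hw2
    exact (eq_of_heq (Sigma.mk.inj_iff.1 h3).2).symm
  · intro p
    have hcond := pb_cond (Over.mk (descA c A)) i X p
    obtain ⟨z, hz⟩ := Quot.exists_rep
      ((pullback.fst (Over.mk (descA c A)).hom (c.leg i)).app X p)
    rw [← hz] at hcond
    have heqv : EqvGen (SStep D X) (tproj A z)
        ⟨i, (pullback.snd (Over.mk (descA c A)).hom (c.leg i)).app X p⟩ :=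
      (leg_eq_iff hc X (tproj A z)
        ⟨i, (pullback.snd (Over.mk (descA c A)).hom (c.leg i)).app X p⟩).1 hcond
    obtain ⟨w, hw1, hw2⟩ := eqvGen_join hnb heqv
    obtain ⟨u, hu, hru⟩ := push_lift A hw1 z rfl
    obtain ⟨y, hy, hry⟩ := lift_exists A hw2 u hu
    refine ⟨y, ?_⟩
    apply pb_inj (Over.mk (descA c A)) i X
    · rw [phiA_fst A i X y, ← hz]
      apply Quot.eq.2
      exact EqvGen.trans _ _ _ (rtg_eqvGen hry) (EqvGen.symm _ _ (rtg_eqvGen hru))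
    · rw [phiA_snd A i X y]
      exact hy

/-- a morphism of cartesian objects whose components are isomorphisms is an
isomorphism -/
lemma cartObj_isIso {A A' : CartObj D} (φ : A ⟶ A') (h : ∀ i, IsIso (φ.1.app i)) :
    IsIso φ := by
  refine ⟨⟨⟨{ app := fun i => inv (φ.1.app i) (I := h i)
              naturality := fun e => ?_ }, fun i => ?_⟩, ?_, ?_⟩⟩
  · haveI := h (I.s e); haveI := h (I.t e)
    rw [IsIso.comp_inv_eq, Category.assoc, φ.1.naturality e, IsIso.inv_hom_id_assoc]
  · haveI := h i
    rw [← φ.2 i, IsIso.inv_hom_id_assoc]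
  · apply Subtype.ext; apply GHom.ext; funext i
    haveI := h i
    show φ.1.app i ≫ inv (φ.1.app i) = 𝟙 _
    simp
  · apply Subtype.ext; apply GHom.ext; funext i
    haveI := h i
    show inv (φ.1.app i) ≫ φ.1.app i = 𝟙 _
    simp

lemma vk_essSurj (hnb : ∀ i : I.V, ¬ I.Branching i) (hnc : ¬ I.HasDirectedCycle)
    (hc : c.IsColimit) : (vkFunctor D c).EssSurj where
  mem_essImage A := by
    refine ⟨Over.mk (descA c A), ⟨?_⟩⟩
    haveI : IsIso (phiA (c := c) A) := by
      apply cartObj_isIso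
      intro i
      haveI : ∀ X : B, IsIso (((phiA (c := c) A).1.app i).app X) := fun X =>
        (isIso_iff_bijective _).2 (phiA_bij hnb hnc hc A i X)
      exact NatIso.isIso_of_isIso_app _
    exact (asIso (phiA (c := c) A)).symm

end VKPartB4
/-- **Diagrams without branching are Van Kampen** (Sect. 6.4).  If the finite shape
graph `I` has no directed cycles and no branching vertices, then for every diagram
`D : I → Set^B` the colimiting cocone is a Van Kampen cocone. -/
theorem no_branching_vanKampen
    {B : Type u} [SmallCategory B] {I : MGraph.{u}} [Finite I.V] [Finite I.E]
    (hnc : ¬ I.HasDirectedCycle)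
    (hnb : ∀ i : I.V, ¬ I.Branching i)
    (D : GDiagram I (B ⥤ Type u)) (c : GCocone D) (hc : c.IsColimit) :
    c.IsVanKampen := by
  refine ⟨vkFunctor D c, fun σ i => pullback.fst σ.hom (c.leg i), vk_pb D c, ?_, ?_⟩
  · intro σ σ' γ i
    exact vk_nat D c γ i
  · exact { faithful := vk_faithful hc, full := vk_full hc,
            essSurj := vk_essSurj hnb hnc hc }
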